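/- (Swap Lemma) Let O be an ordering of a weighted brick complex, A = O⁻¹(i), B = O⁻¹(i+1), F = ∂A ⊓ ∂B, and O' = τ_i ∘ O. If σ(A;S_i) + σ(B;S_i) + 2ω(F) ≤ 0, then Ω(O') ≤ Ω(O) lexicographically. Moreover, if i is a maximum of O and the inequality is strict, then Ω(O') < Ω(O). -/

import Mathlib

open Finset

/-- The total weight of a set of facets. -/
def wt {Facet : Type} [DecidableEq Facet] (ω : Facet → ℝ) (S : Finset Facet) : ℝ :=
  ∑ f ∈ S, ω f

/-- The strength σ(A;S) of a brick with set of interior facets `intA`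
relative to a surface `S`:  ω(∂'_S A) − ω(∂_S A). -/
def strength {Facet : Type} [DecidableEq Facet] (ω : Facet → ℝ) (intA S : Finset Facet) : ℝ :=
  wt ω (intA \ S) - wt ω (intA ∩ S)

/-- A surface (set of facets) is proper if none of its facets lies in ∂M and every
(n−2)-face not in ∂M is contained in an even number of its facets. -/
def ProperSurf {Facet Face : Type} [DecidableEq Facet] [DecidableEq Face]
    (bdF : Finset Facet) (facesOf : Facet → Finset Face) (bdE : Finset Face)
    (S : Finset Facet) : Prop :=
  (∀ f ∈ S, f ∉ bdF) ∧
  ∀ e : Face, e ∉ bdE → Even ((S.filter (fun f => e ∈ facesOf f)).card)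

/-- The interior facets ∂_I A of a brick `A`: facets incident to exactly two bricks,
one of which is `A`. -/
def intFacets {Brick Facet : Type} [DecidableEq Brick] [Fintype Facet] [DecidableEq Facet]
    (bricksOf : Facet → Finset Brick) (A : Brick) : Finset Facet :=
  univ.filter (fun f => A ∈ bricksOf f ∧ (bricksOf f).card = 2)

/-- The facets shared by two bricks `A` and `B` (∂A ⊓ ∂B). -/
def commonFacets {Brick Facet : Type} [DecidableEq Brick] [Fintype Facet] [DecidableEq Facet]
    (bricksOf : Facet → Finset Brick) (A B : Brick) : Finset Facet :=
  univ.filter (fun f => A ∈ bricksOf f ∧ B ∈ bricksOf f)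

/-- `A` is a shortening move for `S` (given interior facets `intA` of `A`):
it meets `S` and σ(A;S) ≤ 0. -/
def ShortMove {Facet : Type} [DecidableEq Facet] (ω : Facet → ℝ) (intA S : Finset Facet) : Prop :=
  (intA ∩ S).Nonempty ∧ strength ω intA S ≤ 0

/-- `A` is a strict shortening move for `S`: it meets `S` and σ(A;S) < 0. -/
def StrictShort {Facet : Type} [DecidableEq Facet] (ω : Facet → ℝ) (intA S : Finset Facet) : Prop :=
  (intA ∩ S).Nonempty ∧ strength ω intA S < 0

/-- The sublevel set M_j of an ordering: the bricks at heights 1,…,j. -/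
def sublevel {Brick : Type} [Fintype Brick] [DecidableEq Brick] {N : ℕ}
    (O : Fin N ≃ Brick) (j : ℕ) : Finset Brick :=
  univ.filter (fun T => ((O.symm T : Fin N) : ℕ) + 1 ≤ j)

/-- The level surface S_j at height j: facets shared between a brick of M_j and a
brick not in M_j. -/
def levelSurf {Brick Facet : Type} [Fintype Brick] [DecidableEq Brick]
    [Fintype Facet] [DecidableEq Facet]
    (bricksOf : Facet → Finset Brick) {N : ℕ} (O : Fin N ≃ Brick) (j : ℕ) : Finset Facet :=
  univ.filter (fun f => (∃ T ∈ bricksOf f, T ∈ sublevel O j) ∧ ∃ T ∈ bricksOf f, T ∉ sublevel O j)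

/-- Λ(j): the weight of the level surface at height j. -/
def Lam {Brick Facet : Type} [Fintype Brick] [DecidableEq Brick]
    [Fintype Facet] [DecidableEq Facet] (ω : Facet → ℝ)
    (bricksOf : Facet → Finset Brick) {N : ℕ} (O : Fin N ≃ Brick) (j : ℕ) : ℝ :=
  wt ω (levelSurf bricksOf O j)

/-- `t` is a (local) maximum of the ordering with level-weight function Λ. -/
def IsMaxAt (N : ℕ) (Λ : ℕ → ℝ) (t : ℕ) : Prop :=
  ∃ tm tp : ℕ, tm < t ∧ t < tp ∧ tp ≤ N ∧
    Λ tm < Λ (tm + 1) ∧ Λ tp < Λ (tp - 1) ∧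
    ∀ k, tm < k → k < tp → Λ k = Λ t

open Classical in
/-- The width Ω of an ordering: the values of Λ at its maxima, arranged in
non-increasing order. -/
noncomputable def widthList (N : ℕ) (Λ : ℕ → ℝ) : List ℝ :=
  ((((Finset.range (N + 1)).filter (fun t => IsMaxAt N Λ t)).val.map Λ).sort (· ≤ ·)).reverse

/-- Strict lexicographic comparison of widths. -/
def WidthLT (l₁ l₂ : List ℝ) : Prop := List.Lex (· < ·) l₁ l₂

/-- Lexicographic comparison of widths. -/
def WidthLE (l₁ l₂ : List ℝ) : Prop := WidthLT l₁ l₂ ∨ l₁ = l₂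


-- ===== auxiliary machinery =====


private instance : IsAntisymm ℝ (· ≥ ·) := ⟨fun _ _ h1 h2 => le_antisymm h2 h1⟩
private instance : IsTrans ℝ (· ≥ ·) := ⟨fun _ _ _ h1 h2 => le_trans h2 h1⟩

lemma lex_append_left {r : ℝ → ℝ → Prop} (u : List ℝ) {v w : List ℝ} (h : List.Lex r v w) :
    List.Lex r (u ++ v) (u ++ w) := by
  induction u with
  | nil => exact h
  | cons a t ih => exact List.Lex.cons ih

/-- desc-sorted view of a multiset -/
noncomputable def dsort (s : Multiset ℝ) : List ℝ := (s.sort (· ≤ ·)).reverse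

lemma dsort_sorted (s : Multiset ℝ) : (dsort s).Pairwise (· ≥ ·) := by
  have := Multiset.pairwise_sort s (· ≤ ·)
  unfold dsort
  rw [List.pairwise_reverse]
  exact this

lemma dsort_coe (s : Multiset ℝ) : ((dsort s) : Multiset ℝ) = s := by
  unfold dsort
  rw [Multiset.coe_reverse, Multiset.sort_eq]

lemma dsort_eq_of_sorted {s : Multiset ℝ} {l : List ℝ} (h : (l : Multiset ℝ) = s)
    (hs : l.Pairwise (· ≥ ·)) : dsort s = l := by
  refine List.Perm.eq_of_pairwise (fun _ _ _ _ h1 h2 => le_antisymm h2 h1) (dsort_sorted s) hs ?_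
  rw [← Multiset.coe_eq_coe, dsort_coe, h]

/-- Key lex lemma: if the parts ≥ b agree except one extra copy of b in s,
then dsort s' < dsort s lexicographically. -/
lemma dsort_lex {s s' : Multiset ℝ} {b : ℝ}
    (h : s.filter (fun x => b ≤ x) = b ::ₘ s'.filter (fun x => b ≤ x)) :
    List.Lex (· < ·) (dsort s') (dsort s) := by
  classical
  set T' : List ℝ := dsort (s'.filter (fun x => b ≤ x)) with hT'
  set D : List ℝ := dsort (s.filter (fun x => ¬ b ≤ x)) with hD
  set D' : List ℝ := dsort (s'.filter (fun x => ¬ b ≤ x)) with hD'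
  have hT'mem : ∀ x ∈ T', b ≤ x := by
    intro x hx
    have : x ∈ (T' : Multiset ℝ) := by exact_mod_cast hx
    rw [hT', dsort_coe, Multiset.mem_filter] at this
    exact this.2
  have hDmem : ∀ x ∈ D, ¬ b ≤ x := by
    intro x hx
    have : x ∈ (D : Multiset ℝ) := by exact_mod_cast hx
    rw [hD, dsort_coe, Multiset.mem_filter] at this
    exact this.2
  have hD'mem : ∀ x ∈ D', ¬ b ≤ x := by
    intro x hx
    have : x ∈ (D' : Multiset ℝ) := by exact_mod_cast hx
    rw [hD', dsort_coe, Multiset.mem_filter] at this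
    exact this.2
  have hs' : dsort s' = T' ++ D' := by
    refine dsort_eq_of_sorted ?_ ?_
    · rw [← Multiset.coe_add, dsort_coe, dsort_coe, Multiset.filter_add_not]
    · rw [List.pairwise_append]
      exact ⟨dsort_sorted _, dsort_sorted _, fun x hx y hy =>
        le_trans (le_of_not_ge (hD'mem y hy)) (hT'mem x hx)⟩
  have hs : dsort s = (T' ++ [b]) ++ D := by
    refine dsort_eq_of_sorted ?_ ?_
    · rw [← Multiset.coe_add, ← Multiset.coe_add, dsort_coe, dsort_coe]
      have h2 : (Multiset.filter (fun x => b ≤ x) s' + (([b] : List ℝ) : Multiset ℝ)) = s.filter (fun x => b ≤ x) := by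
        rw [h, add_comm, ← Multiset.cons_coe]
        simp
      rw [h2, Multiset.filter_add_not]
    · rw [List.pairwise_append, List.pairwise_append]
      refine ⟨⟨dsort_sorted _, by simp, fun x hx y hy => ?_⟩, dsort_sorted _, fun x hx y hy => ?_⟩
      · simp at hy; subst hy; exact hT'mem x hx
      · have hyb := le_of_not_ge (hDmem y hy)
        simp at hx
        rcases hx with hx | hx
        · exact le_trans hyb (le_trans (le_refl b) (hT'mem x hx))
        · subst hx; exact hyb
  rw [hs, hs']
  rw [List.append_assoc]
  apply lex_append_left
  rcases D' with _ | ⟨x, xs⟩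
  · exact List.Lex.nil
  · exact List.Lex.rel (lt_of_not_ge (hD'mem x (by simp)))

lemma isMaxAt_iff {N t : ℕ} {Λ : ℕ → ℝ} :
    IsMaxAt N Λ t ↔ ∃ tm tp : ℕ, tm < t ∧ t < tp ∧ tp ≤ N ∧
      Λ tm < Λ t ∧ Λ tp < Λ t ∧ ∀ k, tm < k → k < tp → Λ k = Λ t := by
  constructor
  · rintro ⟨tm, tp, h1, h2, h3, h4, h5, h6⟩
    have e1 : Λ (tm + 1) = Λ t := h6 _ (by omega) (by omega)
    have e2 : Λ (tp - 1) = Λ t := h6 _ (by omega) (by omega)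
    exact ⟨tm, tp, h1, h2, h3, e1 ▸ h4, e2 ▸ h5, h6⟩
  · rintro ⟨tm, tp, h1, h2, h3, h4, h5, h6⟩
    have e1 : Λ (tm + 1) = Λ t := h6 _ (by omega) (by omega)
    have e2 : Λ (tp - 1) = Λ t := h6 _ (by omega) (by omega)
    exact ⟨tm, tp, h1, h2, h3, e1.symm ▸ h4, e2.symm ▸ h5, h6⟩

section Transfer
variable {N j : ℕ} {Λ Λ' : ℕ → ℝ}

/-- forward transfer: a maximum of Λ other than j stays a maximum after lowering Λ at j. -/
lemma transfer_fwd (hoff : ∀ k, k ≠ j → Λ' k = Λ k) (hlt : Λ' j < Λ j)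
    {t : ℕ} (ht : t ≠ j) (h : IsMaxAt N Λ t) : IsMaxAt N Λ' t := by
  rw [isMaxAt_iff] at h ⊢
  obtain ⟨tm, tp, h1, h2, h3, h4, h5, h6⟩ := h
  have hvt : Λ' t = Λ t := hoff t ht
  by_cases hin : tm < j ∧ j < tp
  · have hjv : Λ j = Λ t := h6 j hin.1 hin.2
    rcases lt_or_gt_of_ne ht with hlt' | hgt
    · -- t < j : use window (tm, j)
      refine ⟨tm, j, h1, hlt', by omega, ?_, ?_, ?_⟩
      · rw [hoff tm (by omega), hvt]; exact h4
      · rw [hvt]; linarith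
      · intro k hk1 hk2
        rw [hoff k (by omega), hvt]; exact h6 k hk1 (by omega)
    · -- t > j : use window (j, tp)
      refine ⟨j, tp, hgt, h2, h3, ?_, ?_, ?_⟩
      · rw [hvt]; linarith
      · rw [hoff tp (by omega), hvt]; exact h5
      · intro k hk1 hk2
        rw [hoff k (by omega), hvt]; exact h6 k (by omega) hk2
  · -- j outside the open window
    have hout : j ≤ tm ∨ tp ≤ j := by
      by_cases h : tm < j
      · right; have : ¬ j < tp := fun hc => hin ⟨h, hc⟩; omega
      · left; omega
    refine ⟨tm, tp, h1, h2, h3, ?_, ?_, ?_⟩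
    · rw [hvt]
      by_cases he : tm = j
      · subst he; linarith
      · rw [hoff tm he]; exact h4
    · rw [hvt]
      by_cases he : tp = j
      · subst he; linarith
      · rw [hoff tp he]; exact h5
    · intro k hk1 hk2
      rw [hoff k (by omega), hvt]; exact h6 k hk1 hk2

/-- backward transfer in the strict case: a maximum of Λ' with value ≥ Λ j comes from
a maximum of Λ, provided j itself is a maximum of Λ. -/
lemma transfer_bwd_strict (hoff : ∀ k, k ≠ j → Λ' k = Λ k) (hlt : Λ' j < Λ j)
    (hmaxj : IsMaxAt N Λ j)
    {t : ℕ} (ht : t ≠ j) (h : IsMaxAt N Λ' t) (hbt : Λ j ≤ Λ' t) : IsMaxAt N Λ t := by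
  rw [isMaxAt_iff] at h hmaxj ⊢
  obtain ⟨tm, tp, h1, h2, h3, h4, h5, h6⟩ := h
  obtain ⟨sm, sp, q1, q2, q3, q4, q5, q6⟩ := hmaxj
  have hvt : Λ' t = Λ t := hoff t ht
  by_cases hin : tm < j ∧ j < tp
  · have hjv : Λ' j = Λ' t := h6 j hin.1 hin.2
    linarith
  · by_cases hjm : j = tm
    · -- j = tm, so j < t
      subst hjm
      have hbt' : Λ j ≤ Λ t := by linarith
      rcases eq_or_lt_of_le hbt' with heq | hltb
      · -- Λ j = Λ t : use the window of j
        have hsp : tp ≤ sp := by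
          by_contra hcon
          push_neg at hcon
          have h7 : Λ' sp = Λ' t := h6 sp (by omega) (by omega)
          rw [hoff sp (by omega)] at h7
          have := q6  -- unused
          linarith [q5]
        refine ⟨sm, sp, by omega, by omega, q3, by linarith, by linarith, ?_⟩
        intro k hk1 hk2
        rw [q6 k hk1 hk2]; linarith
      · -- Λ j < Λ t : window (j, tp)
        refine ⟨j, tp, h1, h2, h3, hltb, ?_, ?_⟩
        · rw [← hoff tp (by omega), ← hvt]; exact h5
        · intro k hk1 hk2
          rw [← hoff k (by omega), h6 k hk1 hk2, hvt]
    · by_cases hjp : j = tp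
      · -- j = tp, so t < j
        subst hjp
        have hbt' : Λ j ≤ Λ t := by linarith
        rcases eq_or_lt_of_le hbt' with heq | hltb
        · have hsm : sm ≤ tm := by
            by_contra hcon
            push_neg at hcon
            have h7 : Λ' sm = Λ' t := h6 sm (by omega) (by omega)
            rw [hoff sm (by omega)] at h7
            linarith [q4]
          refine ⟨sm, sp, by omega, by omega, q3, by linarith, by linarith, ?_⟩
          intro k hk1 hk2
          rw [q6 k hk1 hk2]; linarith
        · refine ⟨tm, j, h1, h2, by omega, ?_, hltb, ?_⟩
          · rw [← hoff tm (by omega), ← hvt]; exact h4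
          · intro k hk1 hk2
            rw [← hoff k (by omega), h6 k hk1 hk2, hvt]
      · -- j outside [tm, tp]
        have hout : j ≤ tm ∨ tp ≤ j := by
          by_cases h : tm < j
          · right; have : ¬ j < tp := fun hc => hin ⟨h, hc⟩; omega
          · left; omega
        refine ⟨tm, tp, h1, h2, h3, ?_, ?_, ?_⟩
        · rw [← hoff tm (by omega), ← hvt]; exact h4
        · rw [← hoff tp (by omega), ← hvt]; exact h5
        · intro k hk1 hk2
          rw [← hoff k (by omega), h6 k hk1 hk2, hvt]
end Transfer

section EqCase
variable {N j : ℕ} {Λ Λ' : ℕ → ℝ}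

/-- in the equality case (j not a maximum of Λ), j is not a maximum of Λ' either. -/
lemma not_max_j' (hoff : ∀ k, k ≠ j → Λ' k = Λ k) (hlt : Λ' j < Λ j)
    (hj1 : 1 ≤ j) (hjN : j + 1 ≤ N) (hnmax : ¬ IsMaxAt N Λ j) : ¬ IsMaxAt N Λ' j := by
  intro h
  rw [isMaxAt_iff] at h
  obtain ⟨tm, tp, h1, h2, h3, h4, h5, h6⟩ := h
  apply hnmax
  rw [isMaxAt_iff]
  refine ⟨j - 1, j + 1, by omega, by omega, hjN, ?_, ?_, ?_⟩
  · by_cases he : j - 1 = tm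
    · rw [← hoff (j-1) (by omega), he]; linarith
    · rw [← hoff (j-1) (by omega), h6 (j-1) (by omega) (by omega)]; linarith
  · by_cases he : j + 1 = tp
    · rw [← hoff (j+1) (by omega), he]; linarith
    · rw [← hoff (j+1) (by omega), h6 (j+1) (by omega) (by omega)]; linarith
  · intro k hk1 hk2
    have : k = j := by omega
    rw [this]

/-- backward transfer in the equality case. -/
lemma transfer_bwd_eq (hoff : ∀ k, k ≠ j → Λ' k = Λ k) (hlt : Λ' j < Λ j)
    (hsub : Λ (j-1) + Λ (j+1) ≤ Λ j + Λ' j)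
    (hj1 : 1 ≤ j) (hjN : j + 1 ≤ N) (hnmax : ¬ IsMaxAt N Λ j)
    {t : ℕ} (ht : t ≠ j) (h : IsMaxAt N Λ' t) : IsMaxAt N Λ t := by
  rw [isMaxAt_iff] at h
  obtain ⟨tm, tp, h1, h2, h3, h4, h5, h6⟩ := h
  have hvt : Λ' t = Λ t := hoff t ht
  rw [isMaxAt_iff]
  by_cases hin : tm < j ∧ j < tp
  · -- j strictly inside the window, j ≠ t : then j would be a maximum of Λ
    have hjv : Λ' j = Λ' t := h6 j hin.1 hin.2
    exfalso
    apply hnmax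
    rw [isMaxAt_iff]
    refine ⟨j - 1, j + 1, by omega, by omega, hjN, ?_, ?_, ?_⟩
    · by_cases he : j - 1 = tm
      · rw [← hoff (j-1) (by omega), he]; linarith
      · rw [← hoff (j-1) (by omega), h6 (j-1) (by omega) (by omega)]; linarith
    · by_cases he : j + 1 = tp
      · rw [← hoff (j+1) (by omega), he]; linarith
      · rw [← hoff (j+1) (by omega), h6 (j+1) (by omega) (by omega)]; linarith
    · intro k hk1 hk2
      have : k = j := by omega
      rw [this]
  · by_cases hjm : j = tm
    · -- j = tm, so j < t
      subst hjm
      have hj1tp : j + 1 < tp := by omega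
      have hc : Λ (j+1) = Λ t := by
        rw [← hoff (j+1) (by omega), h6 (j+1) (by omega) hj1tp, hvt]
      rcases lt_trichotomy (Λ j) (Λ t) with hltb | heq | hgtb
      · refine ⟨j, tp, h1, h2, h3, hltb, ?_, ?_⟩
        · rw [← hoff tp (by omega), ← hvt]; exact h5
        · intro k hk1 hk2
          rw [← hoff k (by omega), h6 k hk1 hk2, hvt]
      · by_cases ha : Λ (j-1) < Λ j
        · exfalso
          apply hnmax
          rw [isMaxAt_iff]
          refine ⟨j - 1, tp, by omega, by omega, h3, ha, ?_, ?_⟩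
          · rw [← hoff tp (by omega)]; linarith
          · intro k hk1 hk2
            by_cases hk : k = j
            · rw [hk]
            · rw [← hoff k hk, h6 k (by omega) hk2, hvt, ← heq]
        · push_neg at ha
          exfalso
          linarith [hsub, hc, heq, ha, hlt]
      · by_cases ha : Λ (j-1) < Λ j
        · exfalso
          apply hnmax
          rw [isMaxAt_iff]
          refine ⟨j - 1, j + 1, by omega, by omega, hjN, ha, by linarith, ?_⟩
          intro k hk1 hk2
          have : k = j := by omega
          rw [this]
        · push_neg at ha
          exfalso
          have h4' : Λ' j < Λ t := by linarith
          linarith [hsub, hc]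
    · by_cases hjp : j = tp
      · -- j = tp, so t < j
        subst hjp
        have htm1 : tm < j - 1 := by omega
        have ha : Λ (j-1) = Λ t := by
          rw [← hoff (j-1) (by omega), h6 (j-1) (by omega) (by omega), hvt]
        rcases lt_trichotomy (Λ j) (Λ t) with hltb | heq | hgtb
        · refine ⟨tm, j, h1, h2, by omega, ?_, hltb, ?_⟩
          · rw [← hoff tm (by omega), ← hvt]; exact h4
          · intro k hk1 hk2
            rw [← hoff k (by omega), h6 k hk1 hk2, hvt]
        · exfalso
          apply hnmax
          rw [isMaxAt_iff]
          have h5' : Λ' j < Λ t := by linarith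
          have hc' : Λ (j+1) < Λ j := by linarith [hsub, ha, heq, h5', hlt]
          refine ⟨tm, j + 1, by omega, by omega, hjN, ?_, hc', ?_⟩
          · rw [← hoff tm (by omega)]; linarith
          · intro k hk1 hk2
            by_cases hk : k = j
            · rw [hk]
            · rw [← hoff k hk, h6 k hk1 (by omega), hvt, ← heq]
        · exfalso
          by_cases hcb : Λ (j+1) < Λ j
          · apply hnmax
            rw [isMaxAt_iff]
            refine ⟨j - 1, j + 1, by omega, by omega, hjN, by linarith, hcb, ?_⟩
            intro k hk1 hk2
            have : k = j := by omega
            rw [this]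
          · push_neg at hcb
            have h5' : Λ' j < Λ t := by linarith
            linarith [hsub, ha]
      · -- j outside [tm, tp]
        have hout : j ≤ tm ∨ tp ≤ j := by
          by_cases h' : tm < j
          · right; have : ¬ j < tp := fun hc => hin ⟨h', hc⟩; omega
          · left; omega
        refine ⟨tm, tp, h1, h2, h3, ?_, ?_, ?_⟩
        · rw [← hoff tm (by omega), ← hvt]; exact h4
        · rw [← hoff tp (by omega), ← hvt]; exact h5
        · intro k hk1 hk2
          rw [← hoff k (by omega), h6 k hk1 hk2, hvt]

end EqCase

open Classical in
lemma widthList_eq_dsort (N : ℕ) (Λ : ℕ → ℝ) :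
    widthList N Λ = dsort (((Finset.range (N + 1)).filter (fun t => IsMaxAt N Λ t)).val.map Λ) := rfl

theorem seq_widths {N j : ℕ} (Λ Λ' : ℕ → ℝ) (hj1 : 1 ≤ j) (hjN : j + 1 ≤ N)
    (hoff : ∀ k, k ≠ j → Λ' k = Λ k) (hle : Λ' j ≤ Λ j)
    (hsub : Λ (j-1) + Λ (j+1) ≤ Λ j + Λ' j) :
    WidthLE (widthList N Λ') (widthList N Λ) ∧
      (IsMaxAt N Λ j → Λ' j < Λ j → WidthLT (widthList N Λ') (widthList N Λ)) := by
  classical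
  have strictcase : IsMaxAt N Λ j → Λ' j < Λ j → WidthLT (widthList N Λ') (widthList N Λ) := by
    intro hmaxj hlt
    rw [widthList_eq_dsort, widthList_eq_dsort]
    apply dsort_lex (b := Λ j)
    have hjnot : j ∉ (Finset.range (N+1)).filter (fun t => Λ j ≤ Λ' t ∧ IsMaxAt N Λ' t) := by
      simp only [Finset.mem_filter]
      rintro ⟨-, hb, -⟩
      linarith
    have hFset : (Finset.range (N+1)).filter (fun t => Λ j ≤ Λ t ∧ IsMaxAt N Λ t)
        = insert j ((Finset.range (N+1)).filter (fun t => Λ j ≤ Λ' t ∧ IsMaxAt N Λ' t)) := by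
      ext t
      simp only [Finset.mem_filter, Finset.mem_insert, Finset.mem_range]
      constructor
      · rintro ⟨htr, hbv, hmax⟩
        by_cases htj : t = j
        · exact Or.inl htj
        · exact Or.inr ⟨htr, by rw [hoff t htj]; exact hbv, transfer_fwd hoff hlt htj hmax⟩
      · rintro (rfl | ⟨htr, hbv, hmax⟩)
        · exact ⟨by omega, le_refl _, hmaxj⟩
        · have htj : t ≠ j := by rintro rfl; linarith
          exact ⟨htr, by rw [← hoff t htj]; exact hbv,
            transfer_bwd_strict hoff hlt hmaxj htj hmax hbv⟩
    have step1 : (((Finset.range (N+1)).filter (fun t => IsMaxAt N Λ t)).val.map Λ).filter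
          (fun x => Λ j ≤ x)
        = ((Finset.range (N+1)).filter (fun t => Λ j ≤ Λ t ∧ IsMaxAt N Λ t)).val.map Λ := by
      rw [Multiset.filter_map]
      congr 1
      rw [Finset.filter_val, Finset.filter_val, Multiset.filter_filter]
      rfl
    have step2 : (((Finset.range (N+1)).filter (fun t => IsMaxAt N Λ' t)).val.map Λ').filter
          (fun x => Λ j ≤ x)
        = ((Finset.range (N+1)).filter (fun t => Λ j ≤ Λ' t ∧ IsMaxAt N Λ' t)).val.map Λ' := by
      rw [Multiset.filter_map]
      congr 1
      rw [Finset.filter_val, Finset.filter_val, Multiset.filter_filter]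
      rfl
    rw [step1, step2, hFset, Finset.insert_val_of_notMem hjnot, Multiset.map_cons]
    congr 1
    apply Multiset.map_congr rfl
    intro x hx
    rw [Finset.mem_val, Finset.mem_filter] at hx
    have hxj : x ≠ j := by rintro rfl; linarith [hx.2.1]
    exact (hoff x hxj).symm
  have eqcase : ¬ IsMaxAt N Λ j → Λ' j < Λ j → widthList N Λ' = widthList N Λ := by
    intro hnmax hlt
    rw [widthList_eq_dsort, widthList_eq_dsort]
    congr 1
    have hFset : (Finset.range (N+1)).filter (fun t => IsMaxAt N Λ' t)
        = (Finset.range (N+1)).filter (fun t => IsMaxAt N Λ t) := by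
      ext t
      simp only [Finset.mem_filter, Finset.mem_range]
      constructor
      · rintro ⟨htr, hmax⟩
        have htj : t ≠ j := by rintro rfl; exact not_max_j' hoff hlt hj1 hjN hnmax hmax
        exact ⟨htr, transfer_bwd_eq hoff hlt hsub hj1 hjN hnmax htj hmax⟩
      · rintro ⟨htr, hmax⟩
        have htj : t ≠ j := by rintro rfl; exact hnmax hmax
        exact ⟨htr, transfer_fwd hoff hlt htj hmax⟩
    apply Multiset.map_congr (congrArg Finset.val hFset)
    intro x hx
    rw [Finset.mem_val, Finset.mem_filter] at hx
    have hxj : x ≠ j := by rintro rfl; exact hnmax hx.2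
    exact hoff x hxj
  refine ⟨?_, strictcase⟩
  rcases eq_or_lt_of_le hle with heq | hlt
  · right
    have hfun : Λ' = Λ := funext fun k => by
      by_cases hk : k = j
      · rw [hk]; exact heq
      · exact hoff k hk
    rw [hfun]
  · by_cases hmax : IsMaxAt N Λ j
    · exact Or.inl (strictcase hmax hlt)
    · exact Or.inr (eqcase hmax hlt)

lemma perfacet {Brick : Type} [DecidableEq Brick] (M : Finset Brick) (A B : Brick)
    (hAB : A ≠ B) (hA : A ∉ M) (hB : B ∉ M) (S : Finset Brick)
    (hf : S.card = 1 ∨ S.card = 2) (w : ℝ) (hw : 0 ≤ w) :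
    ((if (∃ T ∈ S, T ∈ insert B M) ∧ (∃ T ∈ S, T ∉ insert B M) then w else 0)
      = (if (∃ T ∈ S, T ∈ insert A M) ∧ (∃ T ∈ S, T ∉ insert A M) then w else 0)
        + (((if (A ∈ S ∧ S.card = 2) ∧ ¬ ((∃ T ∈ S, T ∈ insert A M) ∧ (∃ T ∈ S, T ∉ insert A M)) then w else 0)
            - (if (A ∈ S ∧ S.card = 2) ∧ ((∃ T ∈ S, T ∈ insert A M) ∧ (∃ T ∈ S, T ∉ insert A M)) then w else 0))
          + ((if (B ∈ S ∧ S.card = 2) ∧ ¬ ((∃ T ∈ S, T ∈ insert A M) ∧ (∃ T ∈ S, T ∉ insert A M)) then w else 0)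
            - (if (B ∈ S ∧ S.card = 2) ∧ ((∃ T ∈ S, T ∈ insert A M) ∧ (∃ T ∈ S, T ∉ insert A M)) then w else 0))
          + 2 * (if A ∈ S ∧ B ∈ S then w else 0)))
    ∧ ((if (∃ T ∈ S, T ∈ M) ∧ (∃ T ∈ S, T ∉ M) then w else 0)
        + (if (∃ T ∈ S, T ∈ insert B (insert A M)) ∧ (∃ T ∈ S, T ∉ insert B (insert A M)) then w else 0)
      ≤ (if (∃ T ∈ S, T ∈ insert A M) ∧ (∃ T ∈ S, T ∉ insert A M) then w else 0)
        + (if (∃ T ∈ S, T ∈ insert B M) ∧ (∃ T ∈ S, T ∉ insert B M) then w else 0)) := by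
  classical
  rcases hf with h1 | h2
  · -- singleton case: no facet with one brick crosses anything
    obtain ⟨x, hx⟩ := Finset.card_eq_one.mp h1
    subst hx
    have hF : ¬ (A ∈ ({x} : Finset Brick) ∧ B ∈ ({x} : Finset Brick)) := by
      rintro ⟨hA', hB'⟩
      simp only [Finset.mem_singleton] at hA' hB'
      exact hAB (hA'.trans hB'.symm)
    have hcross : ∀ X : Finset Brick,
        ¬ ((∃ T ∈ ({x} : Finset Brick), T ∈ X) ∧ ∃ T ∈ ({x} : Finset Brick), T ∉ X) := by
      intro X
      rintro ⟨⟨T, hT, hT2⟩, ⟨U, hU, hU2⟩⟩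
      simp only [Finset.mem_singleton] at hT hU
      subst hT; subst hU; exact hU2 hT2
    have hcard : ¬ (({x} : Finset Brick).card = 2) := by simp
    constructor
    · simp only [hcross, hF, hcard]
      split_ifs <;> first | ring1 | linarith | contradiction | (exfalso; tauto)
    · simp only [hcross]
      split_ifs <;> first | ring1 | linarith | contradiction | (exfalso; tauto)
  · by_cases hAS : A ∈ S
    · by_cases hBS : B ∈ S
      · -- S = {A, B}
        have hSeq : S = {A, B} := by
          apply (Finset.eq_of_subset_of_card_le _ _).symm
          · intro z hz
            simp only [Finset.mem_insert, Finset.mem_singleton] at hz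
            rcases hz with rfl | rfl
            · exact hAS
            · exact hBS
          · rw [h2, Finset.card_insert_of_notMem (by simp [hAB]), Finset.card_singleton]
        subst hSeq
        clear hAS hBS
        have e1 : (∃ T ∈ ({A, B} : Finset Brick), T ∈ insert B M) ∧
            (∃ T ∈ ({A, B} : Finset Brick), T ∉ insert B M) := by
          refine ⟨⟨B, by simp, by simp⟩, ⟨A, by simp, ?_⟩⟩
          simp only [Finset.mem_insert]
          rintro (rfl | hAM) <;> [exact hAB rfl; exact hA hAM]
        have e2 : (∃ T ∈ ({A, B} : Finset Brick), T ∈ insert A M) ∧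
            (∃ T ∈ ({A, B} : Finset Brick), T ∉ insert A M) := by
          refine ⟨⟨A, by simp, by simp⟩, ⟨B, by simp, ?_⟩⟩
          simp only [Finset.mem_insert]
          rintro (rfl | hBM) <;> [exact hAB.symm rfl; exact hB hBM]
        have e0 : ¬ ((∃ T ∈ ({A, B} : Finset Brick), T ∈ M) ∧
            (∃ T ∈ ({A, B} : Finset Brick), T ∉ M)) := by
          rintro ⟨⟨T, hT, hT2⟩, -⟩
          simp only [Finset.mem_insert, Finset.mem_singleton] at hT
          rcases hT with rfl | rfl <;> [exact hA hT2; exact hB hT2]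
        have eAB : ¬ ((∃ T ∈ ({A, B} : Finset Brick), T ∈ insert B (insert A M)) ∧
            (∃ T ∈ ({A, B} : Finset Brick), T ∉ insert B (insert A M))) := by
          rintro ⟨-, ⟨T, hT, hT2⟩⟩
          simp only [Finset.mem_insert, Finset.mem_singleton] at hT
          rcases hT with rfl | rfl <;> simp at hT2
        constructor
        · rw [if_pos e1, if_pos e2, if_neg (fun h => h.2 e2),
            if_pos ⟨⟨Finset.mem_insert_self A {B}, h2⟩, e2⟩,
            if_neg (fun h => h.2 e2), if_pos ⟨⟨by simp, h2⟩, e2⟩,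
            if_pos ⟨Finset.mem_insert_self A {B}, by simp⟩]
          ring
        · rw [if_neg e0, if_neg eAB, if_pos e2, if_pos e1]
          linarith
      · -- A ∈ S, B ∉ S : S = {A, u}
        obtain ⟨x, y, hxy, hS⟩ := Finset.card_eq_two.mp h2
        have hu : ∃ u, u ≠ A ∧ S = {A, u} := by
          rcases Finset.mem_insert.mp (hS ▸ hAS) with rfl | hAy
          · exact ⟨y, fun h => hxy h.symm, hS⟩
          · rw [Finset.mem_singleton] at hAy
            subst hAy
            exact ⟨x, fun h => hxy h, by rw [hS, Finset.pair_comm]⟩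
        obtain ⟨u, huA, hSu⟩ := hu
        subst hSu
        have huB : u ≠ B := by
          intro h; subst h; exact hBS (by simp)
        have ecard : ({A, u} : Finset Brick).card = 2 := by
          rw [Finset.card_insert_of_notMem (fun hc => huA (Finset.mem_singleton.mp hc).symm),
            Finset.card_singleton]
        have hAu : A ∈ ({A, u} : Finset Brick) := Finset.mem_insert_self A {u}
        have huu : u ∈ ({A, u} : Finset Brick) := by simp
        by_cases huM : u ∈ M
        · -- u ∈ M : the A–u facet leaves the cut when A is added
          have nA : ¬ ((∃ T ∈ ({A, u} : Finset Brick), T ∈ insert A M) ∧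
              (∃ T ∈ ({A, u} : Finset Brick), T ∉ insert A M)) := by
            rintro ⟨-, ⟨T, hT, hT2⟩⟩
            rcases Finset.mem_insert.mp hT with rfl | hT'
            · exact hT2 (Finset.mem_insert_self _ _)
            · rw [Finset.mem_singleton] at hT'
              subst hT'
              exact hT2 (Finset.mem_insert_of_mem huM)
          have eB : (∃ T ∈ ({A, u} : Finset Brick), T ∈ insert B M) ∧
              (∃ T ∈ ({A, u} : Finset Brick), T ∉ insert B M) := by
            refine ⟨⟨u, huu, Finset.mem_insert_of_mem huM⟩, ⟨A, hAu, fun hc => ?_⟩⟩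
            rcases Finset.mem_insert.mp hc with rfl | h
            · exact hAB rfl
            · exact hA h
          have e0 : (∃ T ∈ ({A, u} : Finset Brick), T ∈ M) ∧
              (∃ T ∈ ({A, u} : Finset Brick), T ∉ M) := ⟨⟨u, huu, huM⟩, ⟨A, hAu, hA⟩⟩
          have nAB : ¬ ((∃ T ∈ ({A, u} : Finset Brick), T ∈ insert B (insert A M)) ∧
              (∃ T ∈ ({A, u} : Finset Brick), T ∉ insert B (insert A M))) := by
            rintro ⟨-, ⟨T, hT, hT2⟩⟩
            rcases Finset.mem_insert.mp hT with rfl | hT'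
            · exact hT2 (Finset.mem_insert_of_mem (Finset.mem_insert_self _ _))
            · rw [Finset.mem_singleton] at hT'
              subst hT'
              exact hT2 (Finset.mem_insert_of_mem (Finset.mem_insert_of_mem huM))
          constructor
          · rw [if_pos eB, if_neg nA, if_pos ⟨⟨hAu, ecard⟩, nA⟩, if_neg (fun h => nA h.2),
              if_neg (fun h => hBS h.1.1), if_neg (fun h => hBS h.1.1),
              if_neg (fun h => hBS h.2)]
            ring
          · rw [if_pos e0, if_neg nAB, if_neg nA, if_pos eB]
            linarith
        · -- u ∉ M
          have eA : (∃ T ∈ ({A, u} : Finset Brick), T ∈ insert A M) ∧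
              (∃ T ∈ ({A, u} : Finset Brick), T ∉ insert A M) := by
            refine ⟨⟨A, hAu, Finset.mem_insert_self _ _⟩, ⟨u, huu, fun hc => ?_⟩⟩
            rcases Finset.mem_insert.mp hc with rfl | h
            · exact huA rfl
            · exact huM h
          have nB : ¬ ((∃ T ∈ ({A, u} : Finset Brick), T ∈ insert B M) ∧
              (∃ T ∈ ({A, u} : Finset Brick), T ∉ insert B M)) := by
            rintro ⟨⟨T, hT, hT2⟩, -⟩
            rcases Finset.mem_insert.mp hT with rfl | hT'
            · rcases Finset.mem_insert.mp hT2 with rfl | h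
              · exact hAB rfl
              · exact hA h
            · rw [Finset.mem_singleton] at hT'
              subst hT'
              rcases Finset.mem_insert.mp hT2 with rfl | h
              · exact huB rfl
              · exact huM h
          have n0 : ¬ ((∃ T ∈ ({A, u} : Finset Brick), T ∈ M) ∧
              (∃ T ∈ ({A, u} : Finset Brick), T ∉ M)) := by
            rintro ⟨⟨T, hT, hT2⟩, -⟩
            rcases Finset.mem_insert.mp hT with rfl | hT'
            · exact hA hT2
            · rw [Finset.mem_singleton] at hT'
              subst hT'
              exact huM hT2
          have eAB2 : (∃ T ∈ ({A, u} : Finset Brick), T ∈ insert B (insert A M)) ∧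
              (∃ T ∈ ({A, u} : Finset Brick), T ∉ insert B (insert A M)) := by
            refine ⟨⟨A, hAu, Finset.mem_insert_of_mem (Finset.mem_insert_self _ _)⟩,
              ⟨u, huu, fun hc => ?_⟩⟩
            rcases Finset.mem_insert.mp hc with rfl | hc'
            · exact huB rfl
            · rcases Finset.mem_insert.mp hc' with rfl | h
              · exact huA rfl
              · exact huM h
          constructor
          · rw [if_neg nB, if_pos eA, if_neg (fun h => h.2 eA), if_pos ⟨⟨hAu, ecard⟩, eA⟩,
              if_neg (fun h => hBS h.1.1), if_neg (fun h => hBS h.1.1),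
              if_neg (fun h => hBS h.2)]
            ring
          · rw [if_neg n0, if_pos eAB2, if_pos eA, if_neg nB]
            linarith
    · by_cases hBS : B ∈ S
      · -- B ∈ S, A ∉ S : S = {B, u}
        obtain ⟨x, y, hxy, hS⟩ := Finset.card_eq_two.mp h2
        have hu : ∃ u, u ≠ B ∧ S = {B, u} := by
          rcases Finset.mem_insert.mp (hS ▸ hBS) with rfl | hBy
          · exact ⟨y, fun h => hxy h.symm, hS⟩
          · rw [Finset.mem_singleton] at hBy
            subst hBy
            exact ⟨x, fun h => hxy h, by rw [hS, Finset.pair_comm]⟩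
        obtain ⟨u, huB, hSu⟩ := hu
        subst hSu
        have huA : u ≠ A := by
          intro h; subst h; exact hAS (by simp)
        have ecard : ({B, u} : Finset Brick).card = 2 := by
          rw [Finset.card_insert_of_notMem (fun hc => huB (Finset.mem_singleton.mp hc).symm),
            Finset.card_singleton]
        have hBu : B ∈ ({B, u} : Finset Brick) := Finset.mem_insert_self B {u}
        have huu : u ∈ ({B, u} : Finset Brick) := by simp
        by_cases huM : u ∈ M
        · -- u ∈ M
          have eA : (∃ T ∈ ({B, u} : Finset Brick), T ∈ insert A M) ∧
              (∃ T ∈ ({B, u} : Finset Brick), T ∉ insert A M) := by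
            refine ⟨⟨u, huu, Finset.mem_insert_of_mem huM⟩, ⟨B, hBu, fun hc => ?_⟩⟩
            rcases Finset.mem_insert.mp hc with rfl | h
            · exact hAB rfl
            · exact hB h
          have nB : ¬ ((∃ T ∈ ({B, u} : Finset Brick), T ∈ insert B M) ∧
              (∃ T ∈ ({B, u} : Finset Brick), T ∉ insert B M)) := by
            rintro ⟨-, ⟨T, hT, hT2⟩⟩
            rcases Finset.mem_insert.mp hT with rfl | hT'
            · exact hT2 (Finset.mem_insert_self _ _)
            · rw [Finset.mem_singleton] at hT'
              subst hT'
              exact hT2 (Finset.mem_insert_of_mem huM)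
          have e0 : (∃ T ∈ ({B, u} : Finset Brick), T ∈ M) ∧
              (∃ T ∈ ({B, u} : Finset Brick), T ∉ M) := ⟨⟨u, huu, huM⟩, ⟨B, hBu, hB⟩⟩
          have nAB : ¬ ((∃ T ∈ ({B, u} : Finset Brick), T ∈ insert B (insert A M)) ∧
              (∃ T ∈ ({B, u} : Finset Brick), T ∉ insert B (insert A M))) := by
            rintro ⟨-, ⟨T, hT, hT2⟩⟩
            rcases Finset.mem_insert.mp hT with rfl | hT'
            · exact hT2 (Finset.mem_insert_self _ _)
            · rw [Finset.mem_singleton] at hT'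
              subst hT'
              exact hT2 (Finset.mem_insert_of_mem (Finset.mem_insert_of_mem huM))
          constructor
          · rw [if_neg nB, if_pos eA, if_neg (fun h => hAS h.1.1), if_neg (fun h => hAS h.1.1),
              if_neg (fun h => h.2 eA), if_pos ⟨⟨hBu, ecard⟩, eA⟩, if_neg (fun h => hAS h.1)]
            ring
          · rw [if_pos e0, if_neg nAB, if_pos eA, if_neg nB]
            all_goals linarith
        · -- u ∉ M
          have nA : ¬ ((∃ T ∈ ({B, u} : Finset Brick), T ∈ insert A M) ∧
              (∃ T ∈ ({B, u} : Finset Brick), T ∉ insert A M)) := by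
            rintro ⟨⟨T, hT, hT2⟩, -⟩
            rcases Finset.mem_insert.mp hT with rfl | hT'
            · rcases Finset.mem_insert.mp hT2 with rfl | h
              · exact hAB rfl
              · exact hB h
            · rw [Finset.mem_singleton] at hT'
              subst hT'
              rcases Finset.mem_insert.mp hT2 with rfl | h
              · exact huA rfl
              · exact huM h
          have eB : (∃ T ∈ ({B, u} : Finset Brick), T ∈ insert B M) ∧
              (∃ T ∈ ({B, u} : Finset Brick), T ∉ insert B M) := by
            refine ⟨⟨B, hBu, Finset.mem_insert_self _ _⟩, ⟨u, huu, fun hc => ?_⟩⟩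
            rcases Finset.mem_insert.mp hc with rfl | h
            · exact huB rfl
            · exact huM h
          have n0 : ¬ ((∃ T ∈ ({B, u} : Finset Brick), T ∈ M) ∧
              (∃ T ∈ ({B, u} : Finset Brick), T ∉ M)) := by
            rintro ⟨⟨T, hT, hT2⟩, -⟩
            rcases Finset.mem_insert.mp hT with rfl | hT'
            · exact hB hT2
            · rw [Finset.mem_singleton] at hT'
              subst hT'
              exact huM hT2
          have eAB2 : (∃ T ∈ ({B, u} : Finset Brick), T ∈ insert B (insert A M)) ∧
              (∃ T ∈ ({B, u} : Finset Brick), T ∉ insert B (insert A M)) := by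
            refine ⟨⟨B, hBu, Finset.mem_insert_self _ _⟩, ⟨u, huu, fun hc => ?_⟩⟩
            rcases Finset.mem_insert.mp hc with rfl | hc'
            · exact huB rfl
            · rcases Finset.mem_insert.mp hc' with rfl | h
              · exact huA rfl
              · exact huM h
          constructor
          · rw [if_pos eB, if_neg nA, if_neg (fun h => hAS h.1.1), if_neg (fun h => hAS h.1.1),
              if_pos ⟨⟨hBu, ecard⟩, nA⟩, if_neg (fun h => nA h.2), if_neg (fun h => hAS h.1)]
            ring
          · rw [if_neg n0, if_pos eAB2, if_neg nA, if_pos eB]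
            all_goals linarith
      · -- neither A nor B belongs to S : all four cuts agree
        have htr : ∀ (C : Brick), C ∉ S → ∀ (X : Finset Brick),
            (((∃ T ∈ S, T ∈ insert C X) ∧ (∃ T ∈ S, T ∉ insert C X)) ↔
              ((∃ T ∈ S, T ∈ X) ∧ (∃ T ∈ S, T ∉ X))) := by
          intro C hC X
          constructor
          · rintro ⟨⟨T, hT, h1⟩, ⟨U, hU, h2'⟩⟩
            refine ⟨⟨T, hT, ?_⟩, ⟨U, hU, fun hc => h2' (Finset.mem_insert_of_mem hc)⟩⟩
            rcases Finset.mem_insert.mp h1 with rfl | h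
            · exact absurd hT hC
            · exact h
          · rintro ⟨⟨T, hT, h1⟩, ⟨U, hU, h2'⟩⟩
            refine ⟨⟨T, hT, Finset.mem_insert_of_mem h1⟩, ⟨U, hU, fun hc => ?_⟩⟩
            rcases Finset.mem_insert.mp hc with rfl | h
            · exact hC hU
            · exact h2' h
        have hPA := htr A hAS M
        have hPB := htr B hBS M
        have hPAB := (htr B hBS (insert A M)).trans (htr A hAS M)
        by_cases h0 : (∃ T ∈ S, T ∈ M) ∧ (∃ T ∈ S, T ∉ M)
        · constructor
          · rw [if_pos (hPB.mpr h0), if_pos (hPA.mpr h0), if_neg (fun h => hAS h.1.1),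
              if_neg (fun h => hAS h.1.1), if_neg (fun h => hBS h.1.1),
              if_neg (fun h => hBS h.1.1), if_neg (fun h => hAS h.1)]
            all_goals ring
          · rw [if_pos h0, if_pos (hPAB.mpr h0), if_pos (hPA.mpr h0), if_pos (hPB.mpr h0)]
            all_goals linarith
        · constructor
          · rw [if_neg (fun hc => h0 (hPB.mp hc)), if_neg (fun hc => h0 (hPA.mp hc)),
              if_neg (fun h => hAS h.1.1), if_neg (fun h => hAS h.1.1),
              if_neg (fun h => hBS h.1.1), if_neg (fun h => hBS h.1.1),
              if_neg (fun h => hAS h.1)]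
            all_goals ring
          · rw [if_neg h0, if_neg (fun hc => h0 (hPAB.mp hc)),
              if_neg (fun hc => h0 (hPA.mp hc)), if_neg (fun hc => h0 (hPB.mp hc))]
            all_goals linarith

section CutLemmas
variable {Brick Facet : Type} [Fintype Brick] [DecidableEq Brick] [Fintype Facet]
  [DecidableEq Facet]

lemma cut_lemmas (ω : Facet → ℝ) (bricksOf : Facet → Finset Brick)
    (hω : ∀ f, 0 ≤ ω f) (hBC : ∀ f, (bricksOf f).card = 1 ∨ (bricksOf f).card = 2)
    (M : Finset Brick) (A B : Brick) (hAB : A ≠ B) (hA : A ∉ M) (hB : B ∉ M) :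
    (wt ω (univ.filter (fun f => (∃ T ∈ bricksOf f, T ∈ insert B M) ∧
          (∃ T ∈ bricksOf f, T ∉ insert B M)))
      = wt ω (univ.filter (fun f => (∃ T ∈ bricksOf f, T ∈ insert A M) ∧
          (∃ T ∈ bricksOf f, T ∉ insert A M)))
        + (strength ω (intFacets bricksOf A)
              (univ.filter (fun f => (∃ T ∈ bricksOf f, T ∈ insert A M) ∧
                (∃ T ∈ bricksOf f, T ∉ insert A M)))
          + strength ω (intFacets bricksOf B)
              (univ.filter (fun f => (∃ T ∈ bricksOf f, T ∈ insert A M) ∧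
                (∃ T ∈ bricksOf f, T ∉ insert A M)))
          + 2 * wt ω (commonFacets bricksOf A B)))
    ∧ (wt ω (univ.filter (fun f => (∃ T ∈ bricksOf f, T ∈ M) ∧ (∃ T ∈ bricksOf f, T ∉ M)))
        + wt ω (univ.filter (fun f => (∃ T ∈ bricksOf f, T ∈ insert B (insert A M)) ∧
            (∃ T ∈ bricksOf f, T ∉ insert B (insert A M))))
      ≤ wt ω (univ.filter (fun f => (∃ T ∈ bricksOf f, T ∈ insert A M) ∧
            (∃ T ∈ bricksOf f, T ∉ insert A M)))
        + wt ω (univ.filter (fun f => (∃ T ∈ bricksOf f, T ∈ insert B M) ∧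
            (∃ T ∈ bricksOf f, T ∉ insert B M)))) := by
  classical
  have wt_eq : ∀ s : Finset Facet, wt ω s = ∑ f ∈ univ, if f ∈ s then ω f else 0 := by
    intro s; unfold wt; rw [Finset.sum_ite_mem, Finset.univ_inter]
  constructor
  · unfold strength
    rw [wt_eq, wt_eq, wt_eq, wt_eq, wt_eq, wt_eq, wt_eq]
    have pt : ∀ f ∈ (univ : Finset Facet),
        (if f ∈ univ.filter (fun f => (∃ T ∈ bricksOf f, T ∈ insert B M) ∧
            (∃ T ∈ bricksOf f, T ∉ insert B M)) then ω f else 0)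
        = (if f ∈ univ.filter (fun f => (∃ T ∈ bricksOf f, T ∈ insert A M) ∧
            (∃ T ∈ bricksOf f, T ∉ insert A M)) then ω f else 0)
          + (((if f ∈ intFacets bricksOf A \ univ.filter (fun f => (∃ T ∈ bricksOf f, T ∈ insert A M) ∧
                (∃ T ∈ bricksOf f, T ∉ insert A M)) then ω f else 0)
              - (if f ∈ intFacets bricksOf A ∩ univ.filter (fun f => (∃ T ∈ bricksOf f, T ∈ insert A M) ∧
                (∃ T ∈ bricksOf f, T ∉ insert A M)) then ω f else 0))
            + ((if f ∈ intFacets bricksOf B \ univ.filter (fun f => (∃ T ∈ bricksOf f, T ∈ insert A M) ∧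
                (∃ T ∈ bricksOf f, T ∉ insert A M)) then ω f else 0)
              - (if f ∈ intFacets bricksOf B ∩ univ.filter (fun f => (∃ T ∈ bricksOf f, T ∈ insert A M) ∧
                (∃ T ∈ bricksOf f, T ∉ insert A M)) then ω f else 0))
            + 2 * (if f ∈ commonFacets bricksOf A B then ω f else 0)) := by
      intro f _
      have h := (perfacet M A B hAB hA hB (bricksOf f) (hBC f) (ω f) (hω f)).1
      simp only [intFacets, commonFacets, Finset.mem_sdiff, Finset.mem_inter, Finset.mem_filter,
        Finset.mem_univ, true_and]
      linarith [h]
    calc (∑ f ∈ univ, if f ∈ univ.filter (fun f => (∃ T ∈ bricksOf f, T ∈ insert B M) ∧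
            (∃ T ∈ bricksOf f, T ∉ insert B M)) then ω f else 0)
        = ∑ f ∈ univ, ((if f ∈ univ.filter (fun f => (∃ T ∈ bricksOf f, T ∈ insert A M) ∧
            (∃ T ∈ bricksOf f, T ∉ insert A M)) then ω f else 0)
          + (((if f ∈ intFacets bricksOf A \ univ.filter (fun f => (∃ T ∈ bricksOf f, T ∈ insert A M) ∧
                (∃ T ∈ bricksOf f, T ∉ insert A M)) then ω f else 0)
              - (if f ∈ intFacets bricksOf A ∩ univ.filter (fun f => (∃ T ∈ bricksOf f, T ∈ insert A M) ∧
                (∃ T ∈ bricksOf f, T ∉ insert A M)) then ω f else 0))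
            + ((if f ∈ intFacets bricksOf B \ univ.filter (fun f => (∃ T ∈ bricksOf f, T ∈ insert A M) ∧
                (∃ T ∈ bricksOf f, T ∉ insert A M)) then ω f else 0)
              - (if f ∈ intFacets bricksOf B ∩ univ.filter (fun f => (∃ T ∈ bricksOf f, T ∈ insert A M) ∧
                (∃ T ∈ bricksOf f, T ∉ insert A M)) then ω f else 0))
            + 2 * (if f ∈ commonFacets bricksOf A B then ω f else 0))) :=
          Finset.sum_congr rfl pt
      _ = _ := by
          simp only [Finset.sum_add_distrib, Finset.sum_sub_distrib, Finset.mul_sum]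
  · rw [wt_eq, wt_eq, wt_eq, wt_eq]
    rw [← Finset.sum_add_distrib, ← Finset.sum_add_distrib]
    apply Finset.sum_le_sum
    intro f _
    have h := (perfacet M A B hAB hA hB (bricksOf f) (hBC f) (ω f) (hω f)).2
    simp only [Finset.mem_filter, Finset.mem_univ, true_and]
    linarith [h]

end CutLemmas

section Sublevel
variable {Brick : Type} [Fintype Brick] [DecidableEq Brick] {N : ℕ}

lemma sublevel_succ (O : Fin N ≃ Brick) (i : Fin N) :
    sublevel O ((i : ℕ) + 1) = insert (O i) (sublevel O (i : ℕ)) := by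
  ext T
  simp only [sublevel, Finset.mem_filter, Finset.mem_univ, true_and, Finset.mem_insert]
  constructor
  · intro h
    by_cases hv : ((O.symm T : Fin N) : ℕ) = (i : ℕ)
    · left
      have : O.symm T = i := Fin.ext hv
      rw [← this, Equiv.apply_symm_apply]
    · right; omega
  · rintro (rfl | h)
    · rw [Equiv.symm_apply_apply]
    · omega

lemma sublevel_swap_ne (O : Fin N ≃ Brick) (i : Fin N) (hi : (i : ℕ) + 1 < N)
    (k : ℕ) (hk : k ≠ (i : ℕ) + 1) :
    sublevel ((Equiv.swap i ⟨(i : ℕ) + 1, hi⟩).trans O) k = sublevel O k := by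
  ext T
  simp only [sublevel, Finset.mem_filter, Finset.mem_univ, true_and]
  have hsymm : ((Equiv.swap i ⟨(i : ℕ) + 1, hi⟩).trans O).symm T
      = Equiv.swap i ⟨(i : ℕ) + 1, hi⟩ (O.symm T) := by
    rw [Equiv.symm_trans_apply, Equiv.symm_swap]
  rw [hsymm]
  have hval : ((⟨(i : ℕ) + 1, hi⟩ : Fin N) : ℕ) = (i : ℕ) + 1 := rfl
  by_cases h1 : O.symm T = i
  · rw [h1, Equiv.swap_apply_left]
    omega
  · by_cases h2 : O.symm T = ⟨(i : ℕ) + 1, hi⟩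
    · rw [h2, Equiv.swap_apply_right]
      have : ((O.symm T : Fin N) : ℕ) = (i : ℕ) + 1 := by rw [h2]
      omega
    · rw [Equiv.swap_apply_of_ne_of_ne h1 h2]

lemma sublevel_swap_at (O : Fin N ≃ Brick) (i : Fin N) (hi : (i : ℕ) + 1 < N) :
    sublevel ((Equiv.swap i ⟨(i : ℕ) + 1, hi⟩).trans O) ((i : ℕ) + 1)
      = insert (O ⟨(i : ℕ) + 1, hi⟩) (sublevel O (i : ℕ)) := by
  ext T
  simp only [sublevel, Finset.mem_filter, Finset.mem_univ, true_and, Finset.mem_insert]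
  have hsymm : ((Equiv.swap i ⟨(i : ℕ) + 1, hi⟩).trans O).symm T
      = Equiv.swap i ⟨(i : ℕ) + 1, hi⟩ (O.symm T) := by
    rw [Equiv.symm_trans_apply, Equiv.symm_swap]
  rw [hsymm]
  have hval : ((⟨(i : ℕ) + 1, hi⟩ : Fin N) : ℕ) = (i : ℕ) + 1 := rfl
  by_cases h1 : O.symm T = i
  · rw [h1, Equiv.swap_apply_left]
    have hTA : T = O i := by rw [← h1, Equiv.apply_symm_apply]
    have hvi : ((O.symm T : Fin N) : ℕ) = (i : ℕ) := by rw [h1]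
    constructor
    · intro h; omega
    · rintro (rfl | h)
      · exfalso
        rw [Equiv.symm_apply_apply] at h1
        have := congrArg (Fin.val) h1
        omega
      · omega
  · by_cases h2 : O.symm T = ⟨(i : ℕ) + 1, hi⟩
    · rw [h2, Equiv.swap_apply_right]
      have hTB : T = O ⟨(i : ℕ) + 1, hi⟩ := by rw [← h2, Equiv.apply_symm_apply]
      constructor
      · intro _; exact Or.inl hTB
      · intro _; omega
    · rw [Equiv.swap_apply_of_ne_of_ne h1 h2]
      have hxi : ((O.symm T : Fin N) : ℕ) ≠ (i : ℕ) := fun hc => h1 (Fin.ext hc)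
      have hTB : T ≠ O ⟨(i : ℕ) + 1, hi⟩ := fun hc => h2 (by rw [hc, Equiv.symm_apply_apply])
      constructor
      · intro h; right; omega
      · rintro (rfl | h)
        · exact absurd rfl hTB
        · omega

end Sublevel


/-- Swap Lemma: if σ(A;S_i) + σ(B;S_i) + 2ω(F) ≤ 0 for adjacent bricks
A = O⁻¹(i), B = O⁻¹(i+1), then the swapped ordering O' = τ_i ∘ O satisfies
Ω(O') ≤ Ω(O); if moreover i is a maximum of O and the inequality is strict, then
Ω(O') < Ω(O).  (Heights are 1-indexed: brick `O iv` is at height (iv)+1.) -/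
theorem stmt7 {Brick Facet : Type} [Fintype Brick] [DecidableEq Brick]
    [Fintype Facet] [DecidableEq Facet]
    (ω : Facet → ℝ) (hω : ∀ f, 0 ≤ ω f)
    (bricksOf : Facet → Finset Brick)
    (hBC : ∀ f, (bricksOf f).card = 1 ∨ (bricksOf f).card = 2)
    {N : ℕ} (O : Fin N ≃ Brick) (i : Fin N) (hi : (i : ℕ) + 1 < N)
    (O' : Fin N ≃ Brick) (hO' : O' = (Equiv.swap i ⟨(i : ℕ) + 1, hi⟩).trans O)
    (hineq : strength ω (intFacets bricksOf (O i)) (levelSurf bricksOf O ((i : ℕ) + 1))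
        + strength ω (intFacets bricksOf (O ⟨(i : ℕ) + 1, hi⟩)) (levelSurf bricksOf O ((i : ℕ) + 1))
        + 2 * wt ω (commonFacets bricksOf (O i) (O ⟨(i : ℕ) + 1, hi⟩)) ≤ 0) :
    WidthLE (widthList N (Lam ω bricksOf O')) (widthList N (Lam ω bricksOf O)) ∧
    (IsMaxAt N (Lam ω bricksOf O) ((i : ℕ) + 1) →
      strength ω (intFacets bricksOf (O i)) (levelSurf bricksOf O ((i : ℕ) + 1))
        + strength ω (intFacets bricksOf (O ⟨(i : ℕ) + 1, hi⟩)) (levelSurf bricksOf O ((i : ℕ) + 1))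
        + 2 * wt ω (commonFacets bricksOf (O i) (O ⟨(i : ℕ) + 1, hi⟩)) < 0 →
      WidthLT (widthList N (Lam ω bricksOf O')) (widthList N (Lam ω bricksOf O))) := by
  classical
  subst hO'
  have hABne : O i ≠ O ⟨(i : ℕ) + 1, hi⟩ := by
    intro h
    have := congrArg (fun z => ((O.symm z : Fin N) : ℕ)) h
    simp only [Equiv.symm_apply_apply] at this
    omega
  have hAM : O i ∉ sublevel O (i : ℕ) := by
    simp only [sublevel, Finset.mem_filter, Finset.mem_univ, true_and, Equiv.symm_apply_apply]
    omega
  have hBM : O ⟨(i : ℕ) + 1, hi⟩ ∉ sublevel O (i : ℕ) := by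
    simp only [sublevel, Finset.mem_filter, Finset.mem_univ, true_and, Equiv.symm_apply_apply]
    omega
  obtain ⟨G2, G3⟩ := cut_lemmas ω bricksOf hω hBC (sublevel O (i : ℕ))
    (O i) (O ⟨(i : ℕ) + 1, hi⟩) hABne hAM hBM
  have L1 : sublevel O ((i : ℕ) + 1) = insert (O i) (sublevel O (i : ℕ)) := sublevel_succ O i
  have L2 : sublevel O ((i : ℕ) + 1 + 1)
      = insert (O ⟨(i : ℕ) + 1, hi⟩) (insert (O i) (sublevel O (i : ℕ))) := by
    have h := sublevel_succ O ⟨(i : ℕ) + 1, hi⟩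
    rw [show ((⟨(i : ℕ) + 1, hi⟩ : Fin N) : ℕ) = (i : ℕ) + 1 from rfl] at h
    rw [h, L1]
  have L3 := sublevel_swap_at O i hi
  have hLS1 : levelSurf bricksOf O ((i : ℕ) + 1)
      = univ.filter (fun f => (∃ T ∈ bricksOf f, T ∈ insert (O i) (sublevel O (i : ℕ))) ∧
          (∃ T ∈ bricksOf f, T ∉ insert (O i) (sublevel O (i : ℕ)))) := by
    unfold levelSurf
    rw [L1]
  have hoff : ∀ k, k ≠ (i : ℕ) + 1 →
      Lam ω bricksOf ((Equiv.swap i ⟨(i : ℕ) + 1, hi⟩).trans O) k = Lam ω bricksOf O k := by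
    intro k hk
    unfold Lam levelSurf
    rw [sublevel_swap_ne O i hi k hk]
  have hG2 : Lam ω bricksOf ((Equiv.swap i ⟨(i : ℕ) + 1, hi⟩).trans O) ((i : ℕ) + 1)
      = Lam ω bricksOf O ((i : ℕ) + 1)
        + (strength ω (intFacets bricksOf (O i)) (levelSurf bricksOf O ((i : ℕ) + 1))
          + strength ω (intFacets bricksOf (O ⟨(i : ℕ) + 1, hi⟩))
              (levelSurf bricksOf O ((i : ℕ) + 1))
          + 2 * wt ω (commonFacets bricksOf (O i) (O ⟨(i : ℕ) + 1, hi⟩))) := by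
    rw [hLS1]
    unfold Lam levelSurf
    rw [L3, L1]
    exact G2
  have hsub : Lam ω bricksOf O (((i : ℕ) + 1) - 1) + Lam ω bricksOf O (((i : ℕ) + 1) + 1)
      ≤ Lam ω bricksOf O ((i : ℕ) + 1)
        + Lam ω bricksOf ((Equiv.swap i ⟨(i : ℕ) + 1, hi⟩).trans O) ((i : ℕ) + 1) := by
    rw [show ((i : ℕ) + 1) - 1 = (i : ℕ) from rfl]
    unfold Lam levelSurf
    rw [L3, L1, L2]
    exact G3
  have hle : Lam ω bricksOf ((Equiv.swap i ⟨(i : ℕ) + 1, hi⟩).trans O) ((i : ℕ) + 1)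
      ≤ Lam ω bricksOf O ((i : ℕ) + 1) := by
    rw [hG2]; linarith
  obtain ⟨W1, W2⟩ := seq_widths (N := N) (j := (i : ℕ) + 1)
    (Lam ω bricksOf O) (Lam ω bricksOf ((Equiv.swap i ⟨(i : ℕ) + 1, hi⟩).trans O))
    (by omega) hi hoff hle hsub
  refine ⟨W1, fun hmax hstrict => W2 hmax ?_⟩
  rw [hG2]
  linarith
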